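/- Let H be a complex Hilbert space and A : H →L[ℂ] H a bounded self-adjoint operator whose spectrum is contained in [c, ∞) for some c > 0. For s ∈ ℝ let K s be the continuous functional calculus of A applied to x ↦ exp(−i·s·√x)/(2√x), and for continuous compactly supported f₁, f₂ : ℝ → H define λ₂(f₁, f₂) := ∫∫ ⟪f₁ t, (K (t − t′)) (f₂ t′)⟫ dt′ dt. If f₁, f₂ : ℝ → H are twice continuously differentiable with compact support, then λ₂(f₁″ + A ∘ f₁, f₂) = 0 and λ₂(f₁, f₂″ + A ∘ f₂) = 0; that is, λ₂ is a weak bi-solution of the abstract wave equation u″ + A u = 0 in each argument. -/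

import Mathlib

open scoped InnerProductSpace
open MeasureTheory

namespace TwoPointAux
open Complex

variable {H : Type*} [NormedAddCommGroup H] [InnerProductSpace ℂ H] [CompleteSpace H]

set_option maxHeartbeats 1000000 in
lemma key_deriv [Nontrivial H] (A : H →L[ℂ] H) (hA : IsSelfAdjoint A) {c : ℝ} (hc : 0 < c)
    (hspec : spectrum ℝ A ⊆ Set.Ici c)
    (p : ℂ → ℂ) (hp : ContinuousOn p (spectrum ℂ A)) {Cp : ℝ} (hCp : 0 ≤ Cp)
    (hpb : ∀ z ∈ spectrum ℂ A, ‖p z‖ ≤ Cp) (s : ℝ) :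
    HasDerivAt (fun t : ℝ => cfc (fun z : ℂ =>
        p z * Complex.exp (-(Complex.I * (t : ℂ) * (Real.sqrt z.re : ℂ)))) A)
      (cfc (fun z : ℂ => (p z * (-(Complex.I * (Real.sqrt z.re : ℂ)))) *
        Complex.exp (-(Complex.I * (s : ℂ) * (Real.sqrt z.re : ℂ)))) A) s := by
  have hnormal : IsStarNormal A := hA.isStarNormal
  have hre : ∀ z ∈ spectrum ℂ A, c ≤ z.re := by
    intro z hz
    have h := hA.spectrumRestricts.apply_mem hz
    simpa using hspec h
  have hAnorm : ∀ z ∈ spectrum ℂ A, z.re ≤ ‖A‖ := fun z hz =>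
    (Complex.re_le_norm z).trans (spectrum.norm_le_norm_of_mem hz)
  set M := Real.sqrt ‖A‖ with hM
  have hM0 : 0 ≤ M := Real.sqrt_nonneg _
  have hcont_exp : ∀ t : ℝ, Continuous fun z : ℂ =>
      Complex.exp (-(Complex.I * (t : ℂ) * (Real.sqrt z.re : ℂ))) := by
    intro t
    apply Complex.continuous_exp.comp
    continuity
  have hf : ∀ t : ℝ, ContinuousOn (fun z : ℂ =>
      p z * Complex.exp (-(Complex.I * (t : ℂ) * (Real.sqrt z.re : ℂ)))) (spectrum ℂ A) :=
    fun t => hp.mul (hcont_exp t).continuousOn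
  have hdcont : ContinuousOn (fun z : ℂ => (p z * (-(Complex.I * (Real.sqrt z.re : ℂ)))) *
      Complex.exp (-(Complex.I * (s : ℂ) * (Real.sqrt z.re : ℂ)))) (spectrum ℂ A) := by
    refine (hp.mul (Continuous.continuousOn ?_)).mul (hcont_exp s).continuousOn
    continuity
  have key : ∀ s' : ℝ, |s' - s| ≤ 1 / (M + 1) →
      ‖cfc (fun z : ℂ => p z * Complex.exp (-(Complex.I * (s' : ℂ) * (Real.sqrt z.re : ℂ)))) A
        - cfc (fun z : ℂ => p z * Complex.exp (-(Complex.I * (s : ℂ) * (Real.sqrt z.re : ℂ)))) A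
        - (s' - s) • cfc (fun z : ℂ => (p z * (-(Complex.I * (Real.sqrt z.re : ℂ)))) *
            Complex.exp (-(Complex.I * (s : ℂ) * (Real.sqrt z.re : ℂ)))) A‖
        ≤ Cp * ‖A‖ * ‖(s' - s) ^ 2‖ := by
    intro s' hs'
    have e1 : (s' - s) • cfc (fun z : ℂ => (p z * (-(Complex.I * (Real.sqrt z.re : ℂ)))) *
          Complex.exp (-(Complex.I * (s : ℂ) * (Real.sqrt z.re : ℂ)))) A
        = cfc (fun z : ℂ => ((s' - s : ℝ) : ℂ) * ((p z * (-(Complex.I * (Real.sqrt z.re : ℂ)))) *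
            Complex.exp (-(Complex.I * (s : ℂ) * (Real.sqrt z.re : ℂ))))) A := by
      rw [cfc_const_mul _ _ A hdcont, Complex.coe_smul]
    have hmulcont : ContinuousOn (fun z : ℂ => ((s' - s : ℝ) : ℂ) *
        ((p z * (-(Complex.I * (Real.sqrt z.re : ℂ)))) *
          Complex.exp (-(Complex.I * (s : ℂ) * (Real.sqrt z.re : ℂ))))) (spectrum ℂ A) :=
      continuousOn_const.mul hdcont
    have e2 : cfc (fun z : ℂ => p z * Complex.exp (-(Complex.I * (s' : ℂ) * (Real.sqrt z.re : ℂ)))) A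
        - cfc (fun z : ℂ => p z * Complex.exp (-(Complex.I * (s : ℂ) * (Real.sqrt z.re : ℂ)))) A
        - (s' - s) • cfc (fun z : ℂ => (p z * (-(Complex.I * (Real.sqrt z.re : ℂ)))) *
            Complex.exp (-(Complex.I * (s : ℂ) * (Real.sqrt z.re : ℂ)))) A
        = cfc (fun z : ℂ =>
            (p z * Complex.exp (-(Complex.I * (s' : ℂ) * (Real.sqrt z.re : ℂ)))
            - p z * Complex.exp (-(Complex.I * (s : ℂ) * (Real.sqrt z.re : ℂ))))
            - ((s' - s : ℝ) : ℂ) * ((p z * (-(Complex.I * (Real.sqrt z.re : ℂ)))) *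
              Complex.exp (-(Complex.I * (s : ℂ) * (Real.sqrt z.re : ℂ))))) A := by
      rw [e1, ← cfc_sub _ _ A (hf s') (hf s), ← cfc_sub _ _ A ?_ hmulcont]
      exact (hf s').sub (hf s)
    rw [e2]
    refine norm_cfc_le (by positivity) ?_
    intro z hz
    set x := Real.sqrt z.re with hx
    have hx0 : 0 ≤ x := Real.sqrt_nonneg _
    have hxM : x ≤ M := Real.sqrt_le_sqrt (hAnorm z hz)
    have hzre0 : 0 ≤ z.re := hc.le.trans (hre z hz)
    have hx2 : x ^ 2 = z.re := Real.sq_sqrt hzre0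
    have eid : p z * Complex.exp (-(Complex.I * (s' : ℂ) * (x : ℂ)))
        - p z * Complex.exp (-(Complex.I * (s : ℂ) * (x : ℂ)))
        - ((s' - s : ℝ) : ℂ) * ((p z * (-(Complex.I * (x : ℂ)))) *
          Complex.exp (-(Complex.I * (s : ℂ) * (x : ℂ))))
        = p z * Complex.exp (-(Complex.I * (s : ℂ) * (x : ℂ))) *
          (Complex.exp (-(Complex.I * ((s' - s : ℝ) : ℂ) * (x : ℂ))) - 1
            - (-(Complex.I * ((s' - s : ℝ) : ℂ) * (x : ℂ)))) := by
      have hexp : Complex.exp (-(Complex.I * (s' : ℂ) * (x : ℂ)))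
          = Complex.exp (-(Complex.I * (s : ℂ) * (x : ℂ))) *
            Complex.exp (-(Complex.I * ((s' - s : ℝ) : ℂ) * (x : ℂ))) := by
        rw [← Complex.exp_add]
        congr 1
        push_cast
        ring
      rw [hexp]
      push_cast
      ring
    rw [eid]
    have hnexp : ∀ t : ℝ, ‖Complex.exp (-(Complex.I * (t : ℂ) * (x : ℂ)))‖ = 1 := by
      intro t
      rw [Complex.norm_exp]
      have : (-(Complex.I * (t : ℂ) * (x : ℂ))).re = 0 := by simp
      rw [this, Real.exp_zero]
    have hw : ‖-(Complex.I * ((s' - s : ℝ) : ℂ) * (x : ℂ))‖ = |s' - s| * x := by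
      rw [norm_neg, norm_mul, norm_mul, Complex.norm_I, one_mul, Complex.norm_real,
        Complex.norm_real, Real.norm_eq_abs, Real.norm_eq_abs,
        _root_.abs_of_nonneg hx0]
    have hw1 : ‖-(Complex.I * ((s' - s : ℝ) : ℂ) * (x : ℂ))‖ ≤ 1 := by
      rw [hw]
      have h1 : |s' - s| * x ≤ (1 / (M + 1)) * M := by
        apply mul_le_mul hs' hxM hx0 (by positivity)
      have h2 : (1 / (M + 1)) * M ≤ 1 := by
        rw [div_mul_eq_mul_div, one_mul, div_le_one (by positivity)]
        linarith
      linarith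
    have hexp2 : ‖Complex.exp (-(Complex.I * ((s' - s : ℝ) : ℂ) * (x : ℂ))) - 1
        - (-(Complex.I * ((s' - s : ℝ) : ℂ) * (x : ℂ)))‖
        ≤ ‖-(Complex.I * ((s' - s : ℝ) : ℂ) * (x : ℂ))‖ ^ 2 := by
      exact Complex.norm_exp_sub_one_sub_id_le hw1
    rw [norm_mul, norm_mul, hnexp s, mul_one]
    have hb1 : ‖p z‖ * ‖Complex.exp (-(Complex.I * ((s' - s : ℝ) : ℂ) * (x : ℂ))) - 1
        - (-(Complex.I * ((s' - s : ℝ) : ℂ) * (x : ℂ)))‖ ≤ Cp * ((|s' - s| * x) ^ 2) := by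
      calc ‖p z‖ * ‖_ - 1 - _‖ ≤ Cp * ‖-(Complex.I * ((s' - s : ℝ) : ℂ) * (x : ℂ))‖ ^ 2 :=
            mul_le_mul (hpb z hz) hexp2 (norm_nonneg _) hCp
        _ = Cp * ((|s' - s| * x) ^ 2) := by rw [hw]
    refine hb1.trans ?_
    have hxA : x ^ 2 ≤ ‖A‖ := by rw [hx2]; exact hAnorm z hz
    have : (|s' - s| * x) ^ 2 = (s' - s) ^ 2 * x ^ 2 := by
      rw [mul_pow, _root_.sq_abs]
    rw [this]
    have hnorm_sq : ‖(s' - s) ^ 2‖ = (s' - s) ^ 2 := by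
      rw [Real.norm_eq_abs, _root_.abs_of_nonneg (sq_nonneg _)]
    rw [hnorm_sq]
    nlinarith [sq_nonneg (s' - s), mul_le_mul_of_nonneg_left hxA (mul_nonneg hCp (sq_nonneg (s' - s)))]
  rw [hasDerivAt_iff_isLittleO]
  have hsq : (fun s' : ℝ => (s' - s) ^ 2) =o[nhds s] fun s' => s' - s := by
    rw [Asymptotics.isLittleO_iff]
    intro C hC
    filter_upwards [Metric.closedBall_mem_nhds s hC] with x hx
    rw [Metric.mem_closedBall, Real.dist_eq] at hx
    rw [Real.norm_eq_abs, Real.norm_eq_abs, _root_.abs_of_nonneg (sq_nonneg (x - s)),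
      ← _root_.sq_abs (x - s), sq]
    exact mul_le_mul_of_nonneg_right hx (abs_nonneg _)
  refine Asymptotics.IsBigO.trans_isLittleO ?_ hsq
  rw [Asymptotics.isBigO_iff]
  refine ⟨Cp * ‖A‖, ?_⟩
  have hδ : (0 : ℝ) < 1 / (M + 1) := by positivity
  filter_upwards [Metric.closedBall_mem_nhds s hδ] with s' hs'
  rw [Metric.mem_closedBall, Real.dist_eq] at hs'
  beta_reduce
  exact key s' hs'



lemma integral_deriv_eq_zero' {W F : ℝ → ℂ} (hW : ∀ x, HasDerivAt W (F x) x)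
    (hF : Continuous F) (hWc : HasCompactSupport W) (hFc : HasCompactSupport F) :
    ∫ x, F x = 0 := by
  obtain ⟨r, hr⟩ := (hWc.isCompact.union hFc.isCompact).isBounded.subset_closedBall 0
  have hsub : Metric.closedBall (0 : ℝ) r ⊆ Set.Icc (-|r|) |r| := by
    rw [Real.closedBall_eq_Icc]
    apply Set.Icc_subset_Icc
    · rw [zero_sub]
      exact neg_le_neg (le_abs_self r)
    · rw [zero_add]
      exact le_abs_self r
  have h1 : tsupport W ⊆ Set.Icc (-|r|) |r| :=
    (Set.subset_union_left.trans hr).trans hsub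
  have h2 : tsupport F ⊆ Set.Icc (-|r|) |r| :=
    (Set.subset_union_right.trans hr).trans hsub
  set R := |r| + 1 with hR
  have hFI : Function.support F ⊆ Set.Ioc (-R) R := by
    intro x hx
    have hm := h2 (subset_tsupport F hx)
    rw [Set.mem_Icc] at hm
    exact ⟨by simp only [hR]; linarith [hm.1], by simp only [hR]; linarith [hm.2]⟩
  have e1 : ∫ x, F x = ∫ x in (-R)..R, F x :=
    (intervalIntegral.integral_eq_integral_of_support_subset hFI).symm
  have e2 : ∫ x in (-R)..R, F x = W R - W (-R) :=
    intervalIntegral.integral_eq_sub_of_hasDerivAt (fun x _ => hW x)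
      (hF.intervalIntegrable _ _)
  have hWR : W R = 0 := by
    apply image_eq_zero_of_notMem_tsupport
    intro h
    have := (h1 h).2
    simp only [hR] at this
    linarith
  have hWR' : W (-R) = 0 := by
    apply image_eq_zero_of_notMem_tsupport
    intro h
    have := (h1 h).1
    simp only [hR] at this
    linarith
  rw [e1, e2, hWR, hWR']
  ring



set_option maxHeartbeats 1000000 in
lemma kernel_package [Nontrivial H] (A : H →L[ℂ] H) (hA : IsSelfAdjoint A) {c : ℝ} (hc : 0 < c)
    (hspec : spectrum ℝ A ⊆ Set.Ici c)
    (K : ℝ → H →L[ℂ] H)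
    (hK : ∀ s : ℝ, K s = cfc (fun z : ℂ =>
      Complex.exp (-(Complex.I * (s : ℂ) * (Real.sqrt z.re : ℂ)))
        / (2 * (Real.sqrt z.re : ℂ))) A) :
    (∀ s : ℝ, ∀ v : H, (K s) (A v) = A ((K s) v)) ∧
      ∃ D : ℝ → H →L[ℂ] H, (∀ s, HasDerivAt K (D s) s) ∧
        (∀ s, HasDerivAt D (-(A.comp (K s))) s) := by
  have hnormal : IsStarNormal A := hA.isStarNormal
  have hre : ∀ z ∈ spectrum ℂ A, c ≤ z.re := by
    intro z hz
    have h := hA.spectrumRestricts.apply_mem hz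
    simpa using hspec h
  have hAnorm : ∀ z ∈ spectrum ℂ A, z.re ≤ ‖A‖ := fun z hz =>
    (Complex.re_le_norm z).trans (spectrum.norm_le_norm_of_mem hz)
  have hsqrtpos : ∀ z ∈ spectrum ℂ A, 0 < Real.sqrt z.re :=
    fun z hz => Real.sqrt_pos.mpr (hc.trans_le (hre z hz))
  have hzeq : ∀ z ∈ spectrum ℂ A, ((z.re : ℝ) : ℂ) = z := by
    intro z hz
    simpa using hA.spectrumRestricts.rightInvOn hz
  have hp₀ : ContinuousOn (fun z : ℂ => (2 * (Real.sqrt z.re : ℂ))⁻¹) (spectrum ℂ A) := by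
    apply ContinuousOn.inv₀
    · exact Continuous.continuousOn (by continuity)
    · intro z hz
      exact mul_ne_zero two_ne_zero (Complex.ofReal_ne_zero.mpr (hsqrtpos z hz).ne')
  have hKs : ∀ s : ℝ, K s = cfc (fun z : ℂ =>
      (2 * (Real.sqrt z.re : ℂ))⁻¹ * Complex.exp (-(Complex.I * (s : ℂ) * (Real.sqrt z.re : ℂ)))) A := by
    intro s
    rw [hK s]
    congr 1
    funext z
    rw [div_eq_mul_inv, mul_comm]
  have hnorm2 : ∀ z : ℂ, ‖2 * (Real.sqrt z.re : ℂ)‖ = 2 * Real.sqrt z.re := by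
    intro z
    rw [norm_mul, Complex.norm_real, Real.norm_eq_abs, _root_.abs_of_nonneg (Real.sqrt_nonneg _)]
    norm_num
  have hp₀b : ∀ z ∈ spectrum ℂ A, ‖(2 * (Real.sqrt z.re : ℂ))⁻¹‖ ≤ (2 * Real.sqrt c)⁻¹ := by
    intro z hz
    rw [norm_inv, hnorm2]
    have h1 : 2 * Real.sqrt c ≤ 2 * Real.sqrt z.re := by
      have := Real.sqrt_le_sqrt (hre z hz)
      linarith
    exact inv_anti₀ (by positivity) h1
  have hC₀ : (0:ℝ) ≤ (2 * Real.sqrt c)⁻¹ := by positivity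
  have hcont_exp : ∀ t : ℝ, Continuous fun z : ℂ =>
      Complex.exp (-(Complex.I * (t : ℂ) * (Real.sqrt z.re : ℂ))) := by
    intro t
    apply Complex.continuous_exp.comp
    continuity
  have hgcont : ∀ s : ℝ, ContinuousOn (fun z : ℂ =>
      (2 * (Real.sqrt z.re : ℂ))⁻¹ * Complex.exp (-(Complex.I * (s : ℂ) * (Real.sqrt z.re : ℂ))))
      (spectrum ℂ A) := fun s => hp₀.mul (hcont_exp s).continuousOn
  constructor
  · -- commutation
    intro s v
    have h1 : K s * A = A * K s := by
      rw [hKs s]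
      calc cfc (fun z : ℂ => (2 * (Real.sqrt z.re : ℂ))⁻¹ *
              Complex.exp (-(Complex.I * (s : ℂ) * (Real.sqrt z.re : ℂ)))) A * A
          = cfc (fun z : ℂ => (2 * (Real.sqrt z.re : ℂ))⁻¹ *
              Complex.exp (-(Complex.I * (s : ℂ) * (Real.sqrt z.re : ℂ)))) A *
              cfc (fun z : ℂ => z) A := by rw [cfc_id' ℂ A hnormal]
        _ = cfc (fun z : ℂ => ((2 * (Real.sqrt z.re : ℂ))⁻¹ *
              Complex.exp (-(Complex.I * (s : ℂ) * (Real.sqrt z.re : ℂ)))) * z) A :=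
            (cfc_mul _ _ A (hgcont s) continuous_id.continuousOn).symm
        _ = cfc (fun z : ℂ => z * ((2 * (Real.sqrt z.re : ℂ))⁻¹ *
              Complex.exp (-(Complex.I * (s : ℂ) * (Real.sqrt z.re : ℂ))))) A := by
            congr 1
            funext z
            ring
        _ = cfc (fun z : ℂ => z) A * cfc (fun z : ℂ => (2 * (Real.sqrt z.re : ℂ))⁻¹ *
              Complex.exp (-(Complex.I * (s : ℂ) * (Real.sqrt z.re : ℂ)))) A :=
            cfc_mul _ _ A continuous_id.continuousOn (hgcont s)
        _ = A * cfc (fun z : ℂ => (2 * (Real.sqrt z.re : ℂ))⁻¹ *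
              Complex.exp (-(Complex.I * (s : ℂ) * (Real.sqrt z.re : ℂ)))) A := by
            rw [cfc_id' ℂ A hnormal]
    simpa [ContinuousLinearMap.mul_apply] using DFunLike.congr_fun h1 v
  · refine ⟨fun s => cfc (fun z : ℂ => ((2 * (Real.sqrt z.re : ℂ))⁻¹ *
        (-(Complex.I * (Real.sqrt z.re : ℂ)))) *
        Complex.exp (-(Complex.I * (s : ℂ) * (Real.sqrt z.re : ℂ)))) A, ?_, ?_⟩
    · intro s
      have h := key_deriv A hA hc hspec _ hp₀ hC₀ hp₀b s
      have heq : (fun t : ℝ => cfc (fun z : ℂ => (2 * (Real.sqrt z.re : ℂ))⁻¹ *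
          Complex.exp (-(Complex.I * (t : ℂ) * (Real.sqrt z.re : ℂ)))) A) = K :=
        funext fun t => (hKs t).symm
      rw [heq] at h
      exact h
    · intro s
      have hp₁ : ContinuousOn (fun z : ℂ => (2 * (Real.sqrt z.re : ℂ))⁻¹ *
          (-(Complex.I * (Real.sqrt z.re : ℂ)))) (spectrum ℂ A) := by
        refine hp₀.mul (Continuous.continuousOn ?_)
        continuity
      have hp₁b : ∀ z ∈ spectrum ℂ A, ‖(2 * (Real.sqrt z.re : ℂ))⁻¹ *
          (-(Complex.I * (Real.sqrt z.re : ℂ)))‖ ≤ (2 * Real.sqrt c)⁻¹ * Real.sqrt ‖A‖ := by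
        intro z hz
        rw [norm_mul]
        apply mul_le_mul (hp₀b z hz) ?_ (norm_nonneg _) hC₀
        rw [norm_neg, norm_mul, Complex.norm_I, one_mul, Complex.norm_real, Real.norm_eq_abs,
          _root_.abs_of_nonneg (Real.sqrt_nonneg _)]
        exact Real.sqrt_le_sqrt (hAnorm z hz)
      have h := key_deriv A hA hc hspec _ hp₁ (by positivity) hp₁b s
      have hcongr : (spectrum ℂ A).EqOn
          (fun z : ℂ => (((2 * (Real.sqrt z.re : ℂ))⁻¹ * (-(Complex.I * (Real.sqrt z.re : ℂ)))) *
            (-(Complex.I * (Real.sqrt z.re : ℂ)))) *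
            Complex.exp (-(Complex.I * (s : ℂ) * (Real.sqrt z.re : ℂ))))
          (fun z : ℂ => -(z * ((2 * (Real.sqrt z.re : ℂ))⁻¹ *
            Complex.exp (-(Complex.I * (s : ℂ) * (Real.sqrt z.re : ℂ)))))) := by
        intro z hz
        have h2 : ((Real.sqrt z.re : ℝ) : ℂ) * ((Real.sqrt z.re : ℝ) : ℂ) = (z.re : ℂ) := by
          rw [← Complex.ofReal_mul, Real.mul_self_sqrt (hc.le.trans (hre z hz))]
        have h3 := hzeq z hz
        show (((2 * (Real.sqrt z.re : ℂ))⁻¹ * (-(Complex.I * (Real.sqrt z.re : ℂ)))) *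
            (-(Complex.I * (Real.sqrt z.re : ℂ)))) *
            Complex.exp (-(Complex.I * (s : ℂ) * (Real.sqrt z.re : ℂ)))
          = -(z * ((2 * (Real.sqrt z.re : ℂ))⁻¹ *
            Complex.exp (-(Complex.I * (s : ℂ) * (Real.sqrt z.re : ℂ)))))
        have h4 : (((2 * (Real.sqrt z.re : ℂ))⁻¹ * (-(Complex.I * (Real.sqrt z.re : ℂ)))) *
            (-(Complex.I * (Real.sqrt z.re : ℂ)))) *
            Complex.exp (-(Complex.I * (s : ℂ) * (Real.sqrt z.re : ℂ)))
          = (Complex.I * Complex.I) * (((Real.sqrt z.re : ℂ)) * ((Real.sqrt z.re : ℂ))) *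
            ((2 * (Real.sqrt z.re : ℂ))⁻¹ *
              Complex.exp (-(Complex.I * (s : ℂ) * (Real.sqrt z.re : ℂ)))) := by ring
        rw [h4, Complex.I_mul_I, h2, h3]
        ring
      have hval : cfc (fun z : ℂ => (((2 * (Real.sqrt z.re : ℂ))⁻¹ *
          (-(Complex.I * (Real.sqrt z.re : ℂ)))) * (-(Complex.I * (Real.sqrt z.re : ℂ)))) *
          Complex.exp (-(Complex.I * (s : ℂ) * (Real.sqrt z.re : ℂ)))) A
          = -(A.comp (K s)) := by
        rw [cfc_congr hcongr]
        rw [cfc_neg, cfc_mul (fun z : ℂ => z) (fun z : ℂ => (2 * (Real.sqrt z.re : ℂ))⁻¹ *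
          Complex.exp (-(Complex.I * (s : ℂ) * (Real.sqrt z.re : ℂ)))) A
          continuous_id.continuousOn (hgcont s), cfc_id' ℂ A hnormal, hKs s]
        rfl
      rw [hval] at h
      exact h

end TwoPointAux




set_option maxHeartbeats 1000000 in
set_option synthInstance.maxHeartbeats 400000 in
/-- Bi-solution property of the ground-state two-point function: with kernel
`K s = e^{−i s √A}/(2√A)` for a bounded self-adjoint `A` with spectrum in `[c,∞)`,
`c > 0`, the pairing `λ₂(f₁,f₂) = ∫∫ ⟪f₁ t, K(t−t′) f₂ t′⟫ dt′ dt` annihilates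
`f″ + A ∘ f` in each argument, i.e. `λ₂` is a weak bi-solution of `u″ + A u = 0`. -/
theorem two_point_bisolution {H : Type*} [NormedAddCommGroup H]
    [InnerProductSpace ℂ H] [CompleteSpace H]
    (A : H →L[ℂ] H) (hA : IsSelfAdjoint A) (c : ℝ) (hc : 0 < c)
    (hspec : spectrum ℝ A ⊆ Set.Ici c)
    (K : ℝ → H →L[ℂ] H)
    (hK : ∀ s : ℝ, K s = cfc (fun z : ℂ =>
      Complex.exp (-(Complex.I * (s : ℂ) * (Real.sqrt z.re : ℂ)))
        / (2 * (Real.sqrt z.re : ℂ))) A)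
    (lam₂ : (ℝ → H) → (ℝ → H) → ℂ)
    (hlam₂ : ∀ f₁ f₂ : ℝ → H,
      lam₂ f₁ f₂ = ∫ t : ℝ, ∫ t' : ℝ, ⟪f₁ t, (K (t - t')) (f₂ t')⟫_ℂ)
    (f₁ f₂ : ℝ → H) (hf₁ : ContDiff ℝ 2 f₁) (hf₁c : HasCompactSupport f₁)
    (hf₂ : ContDiff ℝ 2 f₂) (hf₂c : HasCompactSupport f₂) :
    lam₂ (fun t => deriv (deriv f₁) t + A (f₁ t)) f₂ = 0 ∧
      lam₂ f₁ (fun t => deriv (deriv f₂) t + A (f₂ t)) = 0 := by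
  rcases subsingleton_or_nontrivial H with hH | hH
  · have hz : ∀ a b : H, ⟪a, b⟫_ℂ = 0 := fun a b => by
      rw [Subsingleton.elim a (0 : H), inner_zero_left]
    constructor <;> (rw [hlam₂]; simp [hz])
  · obtain ⟨hKA, D, hKd, hDd⟩ := TwoPointAux.kernel_package A hA hc hspec K hK
    set ρ : (H →L[ℂ] H) →L[ℝ] (H →L[ℝ] H) :=
      ContinuousLinearMap.restrictScalarsL ℂ H H ℝ ℝ with hρ
    have hρap : ∀ (T : H →L[ℂ] H) (v : H), (ρ T) v = T v := by
      intro T v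
      rw [hρ]
      rw [ContinuousLinearMap.coe_restrict_scalarsL']
      rfl
    have hadj : ∀ x y : H, ⟪x, A y⟫_ℂ = ⟪A x, y⟫_ℂ := by
      intro x y
      have h := ContinuousLinearMap.adjoint_inner_right A x y
      rwa [ContinuousLinearMap.isSelfAdjoint_iff'.mp hA] at h
    have hKcont : Continuous K := by
      have hd : Differentiable ℝ K := fun s => (hKd s).differentiableAt
      exact hd.continuous
    have hsm : ∀ {f : ℝ → H}, ContDiff ℝ 2 f →
        Differentiable ℝ f ∧ Differentiable ℝ (deriv f) ∧ Continuous (deriv (deriv f)) := by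
      intro f hf
      have hf' := contDiff_succ_iff_deriv.mp (by
        rw [one_add_one_eq_two]; exact hf)
      have hf'' := contDiff_succ_iff_deriv.mp (by
        rw [zero_add]; exact hf'.2.2)
      exact ⟨hf'.1, hf''.1, contDiff_zero.mp hf''.2.2⟩
    obtain ⟨hd₁, hd₁', hc₁''⟩ := hsm hf₁
    obtain ⟨hd₂, hd₂', hc₂''⟩ := hsm hf₂
    have hder0 : ∀ {f : ℝ → H}, ∀ x ∉ tsupport f, deriv f x = 0 := by
      intro f x hx
      exact Function.notMem_support.mp (fun hmem => hx (support_deriv_subset hmem))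
    have htsub : ∀ {f : ℝ → H}, tsupport (deriv f) ⊆ tsupport f :=
      fun {f} => closure_minimal support_deriv_subset (isClosed_tsupport f)
    constructor
    · -- first argument
      rw [hlam₂]
      beta_reduce
      have hg₁cont : Continuous fun t => deriv (deriv f₁) t + A (f₁ t) :=
        hc₁''.add (A.continuous.comp hd₁.continuous)
      have hFtotcont : Continuous (fun q : ℝ × ℝ =>
          ⟪deriv (deriv f₁) q.1 + A (f₁ q.1), (K (q.1 - q.2)) (f₂ q.2)⟫_ℂ) :=
        Continuous.inner (hg₁cont.comp continuous_fst)
          ((hKcont.comp (continuous_fst.sub continuous_snd)).clm_apply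
            (hf₂.continuous.comp continuous_snd))
      have hFtotsupp : HasCompactSupport (fun q : ℝ × ℝ =>
          ⟪deriv (deriv f₁) q.1 + A (f₁ q.1), (K (q.1 - q.2)) (f₂ q.2)⟫_ℂ) := by
        apply HasCompactSupport.intro (IsCompact.prod hf₁c hf₂c)
        intro q hq
        by_cases h1 : q.1 ∈ tsupport f₁
        · have h2 : q.2 ∉ tsupport f₂ := fun h2 => hq (Set.mem_prod.mpr ⟨h1, h2⟩)
          simp [image_eq_zero_of_notMem_tsupport h2]
        · simp [hder0 q.1 (fun h => h1 (htsub h)), image_eq_zero_of_notMem_tsupport h1]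
      rw [MeasureTheory.integral_integral_swap
        (hFtotcont.integrable_of_hasCompactSupport hFtotsupp)]
      have hinner : ∀ t' : ℝ,
          (∫ t : ℝ, ⟪deriv (deriv f₁) t + A (f₁ t), (K (t - t')) (f₂ t')⟫_ℂ) = 0 := by
        intro t'
        have hB : ∀ t : ℝ, HasDerivAt (fun u : ℝ => K (u - t')) (D (t - t')) t := by
          intro t
          have h1 : HasDerivAt (fun u : ℝ => u - t') 1 t := (hasDerivAt_id t).sub_const t'
          have h2 := (hKd (t - t')).scomp t h1
          simpa [Function.comp_def] using h2
        have hDt : ∀ t : ℝ, HasDerivAt (fun u : ℝ => D (u - t')) (-(A.comp (K (t - t')))) t := by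
          intro t
          have h1 : HasDerivAt (fun u : ℝ => u - t') 1 t := (hasDerivAt_id t).sub_const t'
          have h2 := (hDd (t - t')).scomp t h1
          simpa [Function.comp_def] using h2
        have hW : ∀ t : ℝ, HasDerivAt
            (fun u => ⟪deriv f₁ u, (K (u - t')) (f₂ t')⟫_ℂ - ⟪f₁ u, (D (u - t')) (f₂ t')⟫_ℂ)
            (⟪deriv (deriv f₁) t + A (f₁ t), (K (t - t')) (f₂ t')⟫_ℂ) t := by
          intro t
          have hBρ : HasDerivAt (fun u : ℝ => ρ (K (u - t'))) (ρ (D (t - t'))) t := by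
            have h := ρ.hasFDerivAt.comp_hasDerivAt t (hB t)
            simpa [Function.comp_def] using h
          have hDρ : HasDerivAt (fun u : ℝ => ρ (D (u - t'))) (ρ (-(A.comp (K (t - t'))))) t := by
            have h := ρ.hasFDerivAt.comp_hasDerivAt t (hDt t)
            simpa [Function.comp_def] using h
          have hKv : HasDerivAt (fun u => (K (u - t')) (f₂ t')) ((D (t - t')) (f₂ t')) t := by
            have h := hBρ.clm_apply (hasDerivAt_const t (f₂ t'))
            simpa [hρap] using h
          have hDv : HasDerivAt (fun u => (D (u - t')) (f₂ t'))
              (-(A ((K (t - t')) (f₂ t')))) t := by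
            have h := hDρ.clm_apply (hasDerivAt_const t (f₂ t'))
            simpa [hρap] using h
          have h1 := HasDerivAt.inner (𝕜 := ℂ) ((hd₁' t).hasDerivAt) hKv
          have h2 := HasDerivAt.inner (𝕜 := ℂ) ((hd₁ t).hasDerivAt) hDv
          have h3 := h1.sub h2
          refine h3.congr_deriv ?_
          simp only [inner_add_left, inner_neg_right]
          rw [hadj (f₁ t) ((K (t - t')) (f₂ t'))]
          ring
        have hFcont : Continuous (fun t =>
            ⟪deriv (deriv f₁) t + A (f₁ t), (K (t - t')) (f₂ t')⟫_ℂ) :=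
          Continuous.inner hg₁cont
            ((hKcont.comp (continuous_id.sub continuous_const)).clm_apply continuous_const)
        have hWc : HasCompactSupport
            (fun u => ⟪deriv f₁ u, (K (u - t')) (f₂ t')⟫_ℂ - ⟪f₁ u, (D (u - t')) (f₂ t')⟫_ℂ) := by
          apply HasCompactSupport.intro hf₁c
          intro x hx
          simp [hder0 x hx, image_eq_zero_of_notMem_tsupport hx]
        have hFc : HasCompactSupport (fun t =>
            ⟪deriv (deriv f₁) t + A (f₁ t), (K (t - t')) (f₂ t')⟫_ℂ) := by
          apply HasCompactSupport.intro hf₁c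
          intro x hx
          simp [hder0 x (fun h => hx (htsub h)), image_eq_zero_of_notMem_tsupport hx]
        exact TwoPointAux.integral_deriv_eq_zero' hW hFcont hWc hFc
      have heq : (fun t' : ℝ =>
          ∫ t : ℝ, ⟪deriv (deriv f₁) t + A (f₁ t), (K (t - t')) (f₂ t')⟫_ℂ) =
          fun _ => (0 : ℂ) := funext hinner
      rw [heq]
      simp
    · -- second argument
      rw [hlam₂]
      beta_reduce
      have hg₂cont : Continuous fun u => deriv (deriv f₂) u + A (f₂ u) :=
        hc₂''.add (A.continuous.comp hd₂.continuous)
      have hinner : ∀ t : ℝ,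
          (∫ u : ℝ, ⟪f₁ t, (K (t - u)) (deriv (deriv f₂) u + A (f₂ u))⟫_ℂ) = 0 := by
        intro t
        have hB : ∀ u : ℝ, HasDerivAt (fun y : ℝ => K (t - y)) (-(D (t - u))) u := by
          intro u
          have h1 : HasDerivAt (fun y : ℝ => t - y) (-1) u := (hasDerivAt_id u).const_sub t
          have h2 := (hKd (t - u)).scomp u h1
          simpa [Function.comp_def] using h2
        have hDB : ∀ u : ℝ, HasDerivAt (fun y : ℝ => D (t - y)) (A.comp (K (t - u))) u := by
          intro u
          have h1 : HasDerivAt (fun y : ℝ => t - y) (-1) u := (hasDerivAt_id u).const_sub t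
          have h2 := (hDd (t - u)).scomp u h1
          simpa [Function.comp_def] using h2
        have hW : ∀ u : ℝ, HasDerivAt
            (fun y => ⟪f₁ t, (K (t - y)) (deriv f₂ y)⟫_ℂ + ⟪f₁ t, (D (t - y)) (f₂ y)⟫_ℂ)
            (⟪f₁ t, (K (t - u)) (deriv (deriv f₂) u + A (f₂ u))⟫_ℂ) u := by
          intro u
          have hBρ : HasDerivAt (fun y : ℝ => ρ (K (t - y))) (ρ (-(D (t - u)))) u := by
            have h := ρ.hasFDerivAt.comp_hasDerivAt u (hB u)
            simpa [Function.comp_def] using h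
          have hDρ : HasDerivAt (fun y : ℝ => ρ (D (t - y))) (ρ (A.comp (K (t - u)))) u := by
            have h := ρ.hasFDerivAt.comp_hasDerivAt u (hDB u)
            simpa [Function.comp_def] using h
          have hKv : HasDerivAt (fun y => (K (t - y)) (deriv f₂ y))
              (-((D (t - u)) (deriv f₂ u)) + (K (t - u)) (deriv (deriv f₂) u)) u := by
            have h := hBρ.clm_apply ((hd₂' u).hasDerivAt)
            simpa [hρap] using h
          have hDv : HasDerivAt (fun y => (D (t - y)) (f₂ y))
              (A ((K (t - u)) (f₂ u)) + (D (t - u)) (deriv f₂ u)) u := by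
            have h := hDρ.clm_apply ((hd₂ u).hasDerivAt)
            simpa [hρap] using h
          have h1 := HasDerivAt.inner (𝕜 := ℂ) (hasDerivAt_const u (f₁ t)) hKv
          have h2 := HasDerivAt.inner (𝕜 := ℂ) (hasDerivAt_const u (f₁ t)) hDv
          have h3 := h1.add h2
          refine h3.congr_deriv ?_
          simp only [inner_add_right, inner_zero_left, map_add, inner_neg_right, add_zero]
          rw [hKA (t - u) (f₂ u)]
          ring
        have hFcont : Continuous (fun u =>
            ⟪f₁ t, (K (t - u)) (deriv (deriv f₂) u + A (f₂ u))⟫_ℂ) :=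
          Continuous.inner continuous_const
            ((hKcont.comp (continuous_const.sub continuous_id)).clm_apply hg₂cont)
        have hWc : HasCompactSupport
            (fun y => ⟪f₁ t, (K (t - y)) (deriv f₂ y)⟫_ℂ + ⟪f₁ t, (D (t - y)) (f₂ y)⟫_ℂ) := by
          apply HasCompactSupport.intro hf₂c
          intro x hx
          simp [hder0 x hx, image_eq_zero_of_notMem_tsupport hx]
        have hFc : HasCompactSupport (fun u =>
            ⟪f₁ t, (K (t - u)) (deriv (deriv f₂) u + A (f₂ u))⟫_ℂ) := by
          apply HasCompactSupport.intro hf₂c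
          intro x hx
          simp [hder0 x (fun h => hx (htsub h)), image_eq_zero_of_notMem_tsupport hx]
        exact TwoPointAux.integral_deriv_eq_zero' hW hFcont hWc hFc
      have heq : (fun t : ℝ =>
          ∫ u : ℝ, ⟪f₁ t, (K (t - u)) (deriv (deriv f₂) u + A (f₂ u))⟫_ℂ) =
          fun _ => (0 : ℂ) := funext hinner
      rw [heq]
      simp
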